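/- The collection 𝒰 = {E ⊆ ℝ : ℝ \ E is I-sparse at every point of E} is a topology on ℝ: it contains ∅ and ℝ, is closed under arbitrary unions, and is closed under finite intersections. -/
import Mathlib


open MeasureTheory Filter Set
open scoped ENNReal

noncomputable section

/-- A nontrivial admissible ideal of subsets of ℕ: closed under subsets and
finite unions, contains every finite set, and does not contain ℕ itself. -/
structure AdmissibleIdeal : Type where
  carrier : Set (Set ℕ)
  subset_mem : ∀ ⦃A B : Set ℕ⦄, A ∈ carrier → B ⊆ A → B ∈ carrier
  union_mem : ∀ ⦃A B : Set ℕ⦄, A ∈ carrier → B ∈ carrier → A ∪ B ∈ carrier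
  finite_mem : ∀ A : Set ℕ, A.Finite → A ∈ carrier
  univ_not_mem : (Set.univ : Set ℕ) ∉ carrier

/-- The filter F(I) = {M ⊆ ℕ : ℕ \ M ∈ I} associated with the ideal I. -/
def AdmissibleIdeal.filter (I : AdmissibleIdeal) : Filter ℕ :=
  Filter.comk (· ∈ I.carrier) (I.finite_mem ∅ Set.finite_empty)
    (fun _t ht _s hs => I.subset_mem ht hs)
    (fun _s hs _t ht => I.union_mem hs ht)

/-- A sequence of closed intervals admissible about the point `p`:
each `J n` is a closed interval containing `p`, and
`{n : 0 < λ(J n) < 1/n} ∈ F(I)`. -/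
def AdmissibleSeq (I : AdmissibleIdeal) (p : ℝ) (J : ℕ → Set ℝ) : Prop :=
  (∀ n, ∃ a b : ℝ, a ≤ b ∧ J n = Set.Icc a b) ∧ (∀ n, p ∈ J n) ∧
    {n : ℕ | 0 < volume (J n) ∧ volume (J n) < (n : ℝ≥0∞)⁻¹} ∈ I.filter

/-- The sequence n ↦ λ(E ∩ J n)/λ(J n) (interpreted as 0 when λ(J n) = 0). -/
def ratioSeq (E : Set ℝ) (J : ℕ → Set ℝ) : ℕ → ℝ :=
  fun n => (volume (E ∩ J n) / volume (J n)).toReal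

/-- Upper I-density of `E` at `p`: sup over admissible sequences of the
limsup along `F(I)` of the measure ratios. -/
def upperIDensity (I : AdmissibleIdeal) (p : ℝ) (E : Set ℝ) : ℝ :=
  sSup {l : ℝ | ∃ J : ℕ → Set ℝ, AdmissibleSeq I p J ∧
    l = Filter.limsup (ratioSeq E J) I.filter}

/-- Lower I-density of `E` at `p`: inf over admissible sequences of the
liminf along `F(I)` of the measure ratios. -/
def lowerIDensity (I : AdmissibleIdeal) (p : ℝ) (E : Set ℝ) : ℝ :=
  sInf {l : ℝ | ∃ J : ℕ → Set ℝ, AdmissibleSeq I p J ∧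
    l = Filter.liminf (ratioSeq E J) I.filter}

/-- `C` is a measurable cover of `A`. -/
def IsMeasurableCover (C A : Set ℝ) : Prop :=
  MeasurableSet C ∧ A ⊆ C ∧
    ∀ F : Set ℝ, MeasurableSet F → F ⊆ C \ A → volume F = 0

/-- `A` is I-sparse at `x`, i.e. `A ∈ S_I(x)`. -/
def ISparseAt (I : AdmissibleIdeal) (A : Set ℝ) (x : ℝ) : Prop :=
  ∀ B : Set ℝ, MeasurableSet B → upperIDensity I x B < 1 →
    ∀ C : Set ℝ, IsMeasurableCover C A → upperIDensity I x (C ∪ B) < 1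

/-- The I-density topology T_I. -/
def IDensityTopology (I : AdmissibleIdeal) : Set (Set ℝ) :=
  {E | MeasurableSet E ∧ ∀ x ∈ E, lowerIDensity I x E = 1}

/-- The I-sparse set topology 𝒰. -/
def sparseTop (I : AdmissibleIdeal) : Set (Set ℝ) :=
  {E | ∀ x ∈ E, ISparseAt I Eᶜ x}


section Aux

variable (I : AdmissibleIdeal)

lemma filter_neBot : I.filter.NeBot := by
  refine ⟨fun h => I.univ_not_mem ?_⟩
  have h0 : (∅ : Set ℕ) ∈ I.filter := by rw [h]; exact Filter.mem_bot
  simpa [AdmissibleIdeal.filter, Filter.mem_comk] using h0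

lemma exists_admissible (p : ℝ) : ∃ J : ℕ → Set ℝ, AdmissibleSeq I p J := by
  refine ⟨fun n => Set.Icc p (p + ((n : ℝ) + 2)⁻¹), fun n => ⟨p, p + ((n : ℝ) + 2)⁻¹,
    le_add_of_nonneg_right (by positivity), rfl⟩,
    fun n => ⟨le_refl p, le_add_of_nonneg_right (by positivity)⟩, ?_⟩
  refine Filter.univ_mem' fun n => ?_
  have hpos : (0 : ℝ) < ((n : ℝ) + 2)⁻¹ := by positivity
  have hvol : volume (Set.Icc p (p + ((n : ℝ) + 2)⁻¹)) = ENNReal.ofReal (((n : ℝ) + 2)⁻¹) := by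
    rw [Real.volume_Icc]; ring_nf
  constructor
  · rw [hvol]; exact ENNReal.ofReal_pos.mpr hpos
  · rw [hvol]
    rcases Nat.eq_zero_or_pos n with hn | hn
    · subst hn; simp
    · have hn' : (0 : ℝ) < (n : ℝ) := by exact_mod_cast hn
      have : ((n : ℝ≥0∞))⁻¹ = ENNReal.ofReal ((n : ℝ)⁻¹) := by
        rw [ENNReal.ofReal_inv_of_pos hn', ENNReal.ofReal_natCast]
      rw [this]
      refine (ENNReal.ofReal_lt_ofReal_iff (by positivity)).mpr ?_
      apply inv_strictAnti₀ hn'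
      linarith

lemma ratio_div_le_one (E : Set ℝ) (J : ℕ → Set ℝ) (n : ℕ) :
    volume (E ∩ J n) / volume (J n) ≤ 1 :=
  ENNReal.div_le_of_le_mul (by simpa using measure_mono (Set.inter_subset_right (s := E)))

lemma ratioSeq_nonneg (E : Set ℝ) (J : ℕ → Set ℝ) (n : ℕ) : 0 ≤ ratioSeq E J n :=
  ENNReal.toReal_nonneg

lemma ratioSeq_le_one (E : Set ℝ) (J : ℕ → Set ℝ) (n : ℕ) : ratioSeq E J n ≤ 1 := by
  have := ENNReal.toReal_mono (by simp) (ratio_div_le_one E J n)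
  simpa [ratioSeq] using this

lemma ratio_bddUnder (E : Set ℝ) (J : ℕ → Set ℝ) :
    Filter.IsBoundedUnder (· ≤ ·) I.filter (ratioSeq E J) :=
  Filter.isBoundedUnder_of ⟨1, fun n => ratioSeq_le_one E J n⟩

lemma ratio_cobdd (E : Set ℝ) (J : ℕ → Set ℝ) :
    Filter.IsCoboundedUnder (· ≤ ·) I.filter (ratioSeq E J) := by
  haveI := filter_neBot I
  exact Filter.IsBoundedUnder.isCoboundedUnder_le
    (Filter.isBoundedUnder_of ⟨0, fun n => ratioSeq_nonneg E J n⟩)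

lemma density_set_bddAbove (p : ℝ) (E : Set ℝ) :
    BddAbove {l : ℝ | ∃ J : ℕ → Set ℝ, AdmissibleSeq I p J ∧
      l = Filter.limsup (ratioSeq E J) I.filter} := by
  refine ⟨1, ?_⟩
  rintro l ⟨J, hJ, rfl⟩
  exact Filter.limsup_le_of_le (ratio_cobdd I E J)
    (Filter.Eventually.of_forall fun n => ratioSeq_le_one E J n)

lemma upperIDensity_mono (p : ℝ) {E E' : Set ℝ} (h : E ⊆ E') :
    upperIDensity I p E ≤ upperIDensity I p E' := by
  haveI := filter_neBot I
  obtain ⟨J0, hJ0⟩ := exists_admissible I p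
  have hbdd := density_set_bddAbove I p E'
  have h0 : (0 : ℝ) ≤ upperIDensity I p E' := by
    refine le_trans ?_ (le_csSup hbdd ⟨J0, hJ0, rfl⟩)
    refine Filter.le_limsup_of_frequently_le ?_ (ratio_bddUnder I E' J0)
    exact (Filter.Eventually.of_forall fun n => ratioSeq_nonneg E' J0 n).frequently
  refine Real.sSup_le ?_ h0
  rintro l ⟨J, hJ, rfl⟩
  refine le_trans ?_ (le_csSup hbdd ⟨J, hJ, rfl⟩)
  refine Filter.limsup_le_limsup (Filter.Eventually.of_forall fun n => ?_)
    (ratio_cobdd I E J) (ratio_bddUnder I E' J)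
  refine ENNReal.toReal_mono ((ratio_div_le_one E' J n).trans_lt ENNReal.one_lt_top).ne ?_
  exact ENNReal.div_le_div_right (measure_mono (Set.inter_subset_inter_left _ h)) _

lemma upperIDensity_union_null (p : ℝ) (E N : Set ℝ) (hN : volume N = 0) :
    upperIDensity I p (E ∪ N) = upperIDensity I p E := by
  have key : ∀ J : ℕ → Set ℝ, ratioSeq (E ∪ N) J = ratioSeq E J := by
    intro J
    funext n
    have hv : volume ((E ∪ N) ∩ J n) = volume (E ∩ J n) := by
      refine le_antisymm ?_ (measure_mono (Set.inter_subset_inter_left _ Set.subset_union_left))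
      calc volume ((E ∪ N) ∩ J n) ≤ volume ((E ∩ J n) ∪ N) := by
            refine measure_mono ?_
            rintro y ⟨hy1 | hy1, hy2⟩
            · exact Or.inl ⟨hy1, hy2⟩
            · exact Or.inr hy1
        _ ≤ volume (E ∩ J n) + volume N := measure_union_le _ _
        _ = volume (E ∩ J n) := by rw [hN, add_zero]
    simp [ratioSeq, hv]
  unfold upperIDensity
  congr 1
  ext l
  simp only [Set.mem_setOf_eq, key]

lemma exists_measurableCover (A : Set ℝ) : ∃ C : Set ℝ, IsMeasurableCover C A := by
  refine ⟨toMeasurable volume A, measurableSet_toMeasurable _ _, subset_toMeasurable _ _, ?_⟩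
  intro F hF hsub
  have hFsub : F ⊆ toMeasurable volume A := hsub.trans Set.diff_subset
  have h1 : toMeasurable volume A ∩ F = F := Set.inter_eq_right.mpr hFsub
  have h2 : A ∩ F = ∅ := by
    ext y
    simp only [Set.mem_inter_iff, Set.mem_empty_iff_false, iff_false, not_and]
    intro hyA hyF
    exact (hsub hyF).2 hyA
  have := MeasureTheory.Measure.measure_toMeasurable_inter_of_sFinite (μ := volume) hF A
  rw [h1, h2] at this
  simpa using this

lemma sparse_mono {A A' : Set ℝ} {x : ℝ} (h : A' ⊆ A) (hx : ISparseAt I A x) :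
    ISparseAt I A' x := by
  intro B hB hBd C hC
  obtain ⟨D, hD⟩ := exists_measurableCover A
  have hCD : IsMeasurableCover (C ∪ D) A := by
    refine ⟨hC.1.union hD.1, hD.2.1.trans Set.subset_union_right, ?_⟩
    intro F hF hsub
    have h1 : volume (F ∩ C) = 0 := by
      refine hC.2.2 (F ∩ C) (hF.inter hC.1) ?_
      rintro y ⟨hyF, hyC⟩
      exact ⟨hyC, fun hyA' => (hsub hyF).2 (h hyA')⟩
    have h2 : volume (F \ C) = 0 := by
      refine hD.2.2 (F \ C) (hF.diff hC.1) ?_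
      rintro y ⟨hyF, hyC⟩
      rcases (hsub hyF).1 with hc | hd
      · exact absurd hc hyC
      · exact ⟨hd, (hsub hyF).2⟩
    have := measure_inter_add_diff (μ := volume) F hC.1
    calc volume F = volume (F ∩ C) + volume (F \ C) := this.symm
      _ = 0 := by rw [h1, h2, add_zero]
  have hlt := hx B hB hBd (C ∪ D) hCD
  refine lt_of_le_of_lt ?_ hlt
  exact upperIDensity_mono I x (Set.union_subset_union_left B Set.subset_union_left)

end Aux

/-- The collection 𝒰 is a topology on ℝ: it contains ∅ and ℝ, is closed under
arbitrary unions and under finite intersections. -/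
theorem sparseTop_is_topology (I : AdmissibleIdeal) :
    (∅ : Set ℝ) ∈ sparseTop I ∧ (Set.univ : Set ℝ) ∈ sparseTop I ∧
    (∀ S : Set (Set ℝ), S ⊆ sparseTop I → ⋃₀ S ∈ sparseTop I) ∧
    (∀ A ∈ sparseTop I, ∀ B ∈ sparseTop I, A ∩ B ∈ sparseTop I) := by
  haveI := filter_neBot I
  refine ⟨fun x hx => absurd hx (Set.notMem_empty x), ?_, ?_, ?_⟩
  · intro x _ B hB hBd C hC
    have hC0 : volume C = 0 := hC.2.2 C hC.1 (by simp)
    rw [Set.union_comm, upperIDensity_union_null I x B C hC0]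
    exact hBd
  · intro S hS x hx
    obtain ⟨E0, hE0S, hxE0⟩ := hx
    refine sparse_mono I ?_ (hS hE0S x hxE0)
    exact Set.compl_subset_compl.mpr (Set.subset_sUnion_of_mem hE0S)
  · intro A hA B hB x hx
    intro B0 hB0 hB0d C hC
    obtain ⟨DA, hDA⟩ := exists_measurableCover Aᶜ
    obtain ⟨DB, hDB⟩ := exists_measurableCover Bᶜ
    have h1 : upperIDensity I x (DB ∪ B0) < 1 := hB x hx.2 B0 hB0 hB0d DB hDB
    have h2 : upperIDensity I x (DA ∪ (DB ∪ B0)) < 1 :=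
      hA x hx.1 (DB ∪ B0) (hDB.1.union hB0) h1 DA hDA
    have hN : volume (C \ (DA ∪ DB)) = 0 := by
      refine hC.2.2 _ (hC.1.diff (hDA.1.union hDB.1)) ?_
      rintro y ⟨hyC, hyD⟩
      refine ⟨hyC, fun hyAB => ?_⟩
      rcases not_and_or.mp hyAB with hyA | hyB
      · exact hyD (Or.inl (hDA.2.1 hyA))
      · exact hyD (Or.inr (hDB.2.1 hyB))
    have hsub : C ∪ B0 ⊆ (DA ∪ (DB ∪ B0)) ∪ (C \ (DA ∪ DB)) := by
      intro y hy
      rcases hy with hyC | hyB0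
      · by_cases hyD : y ∈ DA ∪ DB
        · rcases hyD with h | h
          · exact Or.inl (Or.inl h)
          · exact Or.inl (Or.inr (Or.inl h))
        · exact Or.inr ⟨hyC, hyD⟩
      · exact Or.inl (Or.inr (Or.inr hyB0))
    calc upperIDensity I x (C ∪ B0)
        ≤ upperIDensity I x ((DA ∪ (DB ∪ B0)) ∪ (C \ (DA ∪ DB))) :=
          upperIDensity_mono I x hsub
      _ = upperIDensity I x (DA ∪ (DB ∪ B0)) := upperIDensity_union_null I x _ _ hN
      _ < 1 := h2
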